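/- The number of strings s' over {0,1} with ED(s, s') ≤ D, for a fixed bitstring s of length m, is at most binom(4m + 5D + 4, D), which by Stirling is at most (4e·m/D + 5e + 4e/D)^D. -/

import Mathlib

open Real

namespace Levenshtein

/-- A cost function for edit distance (reinstated: removed from Mathlib). -/
structure Cost (α β δ : Type*) where
  delete : α → δ
  insert : β → δ
  substitute : α → β → δ

/-- The default cost: insertions, deletions and substitutions of distinct letters cost `1`. -/
def defaultCost {α : Type*} [DecidableEq α] : Cost α α ℕ where
  delete _ := 1
  insert _ := 1
  substitute a b := if a = b then 0 else 1

/-- Inner loop of the dynamic-programming Levenshtein computation. -/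
def impl {α β δ : Type*} [AddZeroClass δ] [Min δ] (C : Cost α β δ)
    (xs : List α) (y : β) (d : {r : List δ // 0 < r.length}) : {r : List δ // 0 < r.length} :=
  let ⟨ds, w⟩ := d
  xs.zip (ds.zip ds.tail) |>.foldr
    (init := ⟨[C.insert y + ds.getLast (List.length_pos_iff.mp w)], by simp⟩)
    (fun ⟨x, d₀, d₁⟩ ⟨r, w⟩ =>
      ⟨min (C.delete x + r[0]) (min (C.insert y + d₀) (C.substitute x y + d₁)) :: r, by simp⟩)

end Levenshtein

open Levenshtein in
/-- Levenshtein distances of all suffixes of `xs` to `ys`. -/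
def suffixLevenshtein {α β δ : Type*} [AddZeroClass δ] [Min δ] (C : Cost α β δ)
    (xs : List α) (ys : List β) : {r : List δ // 0 < r.length} :=
  ys.foldr
    (impl C xs)
    (xs.foldr (init := ⟨[0], by simp⟩)
      (fun a ⟨r, w⟩ => ⟨(C.delete a + r[0]) :: r, by simp⟩))

open Levenshtein in
/-- The Levenshtein distance with cost function `C`. -/
def levenshtein {α β δ : Type*} [AddZeroClass δ] [Min δ] (C : Cost α β δ)
    (xs : List α) (ys : List β) : δ :=
  let ⟨r, w⟩ := suffixLevenshtein C xs ys
  r[0]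


namespace Levenshtein

@[simp] theorem defaultCost_delete {α : Type*} [DecidableEq α] (a : α) :
    (defaultCost : Cost α α ℕ).delete a = 1 := rfl

@[simp] theorem defaultCost_insert {α : Type*} [DecidableEq α] (a : α) :
    (defaultCost : Cost α α ℕ).insert a = 1 := rfl

@[simp] theorem defaultCost_substitute {α : Type*} [DecidableEq α] (a b : α) :
    (defaultCost : Cost α α ℕ).substitute a b = if a = b then 0 else 1 := rfl

end Levenshtein

section LevPort
open Levenshtein

variable {α β δ : Type*} [AddZeroClass δ] [Min δ] {C : Cost α β δ}

theorem LevPort.impl_cons {x : α} {xs : List α} {y : β} {d : δ} {ds : List δ} {w}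
    (w' : 0 < List.length ds) :
    impl C (x :: xs) y ⟨d :: ds, w⟩ =
      let ⟨r, w⟩ := impl C xs y ⟨ds, w'⟩
      ⟨min (C.delete x + r[0]) (min (C.insert y + d) (C.substitute x y + ds[0])) :: r, by simp⟩ :=
  match ds, w' with | _ :: _, _ => rfl

theorem LevPort.impl_cons_fst_zero {x : α} {xs : List α} {y : β} {d : δ} {ds : List δ} {w}
    (h) (w' : 0 < List.length ds) :
    (impl C (x :: xs) y ⟨d :: ds, w⟩).1[0]'h =
      let ⟨r, w⟩ := impl C xs y ⟨ds, w'⟩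
      min (C.delete x + r[0]) (min (C.insert y + d) (C.substitute x y + ds[0])) :=
  match ds, w' with | _ :: _, _ => rfl

theorem LevPort.impl_length {xs : List α} {y : β} (d : {r : List δ // 0 < r.length})
    (w : d.1.length = xs.length + 1) :
    (impl C xs y d).1.length = xs.length + 1 := by
  induction xs generalizing d with
  | nil => rfl
  | cons x xs ih =>
    dsimp [impl]
    match d, w with
    | ⟨d₁ :: d₂ :: ds, _⟩, w =>
      dsimp
      congr 1
      exact ih ⟨d₂ :: ds, (by simp)⟩ (by simpa using w)

theorem LevPort.suffixLevenshtein_length (xs : List α) (ys : List β) :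
    (suffixLevenshtein C xs ys).1.length = xs.length + 1 := by
  induction ys with
  | nil =>
    dsimp [suffixLevenshtein]
    induction xs with
    | nil => rfl
    | cons _ xs ih =>
      simp_all
  | cons y ys ih =>
    dsimp [suffixLevenshtein]
    rw [LevPort.impl_length]
    exact ih

theorem LevPort.suffixLevenshtein_cons₂ (xs : List α) (y : β) (ys) :
    suffixLevenshtein C xs (y :: ys) = (impl C xs) y (suffixLevenshtein C xs ys) := rfl

theorem LevPort.suffixLevenshtein_cons₁_aux {x y : {r : List δ // 0 < r.length}}
    (w₀ : x.1[0]'x.2 = y.1[0]'y.2) (w : x.1.tail = y.1.tail) : x = y := by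
  match x, y with
  | ⟨hx :: tx, _⟩, ⟨hy :: ty, _⟩ => simp_all

theorem LevPort.suffixLevenshtein_cons₁ (x : α) (xs : List α) (ys : List β) :
    suffixLevenshtein C (x :: xs) ys =
      ⟨levenshtein C (x :: xs) ys ::
        (suffixLevenshtein C xs ys).1, by simp⟩ := by
  induction ys with
  | nil =>
    dsimp [levenshtein, suffixLevenshtein]
    rfl
  | cons y ys ih =>
    apply LevPort.suffixLevenshtein_cons₁_aux
    · rfl
    · rw [LevPort.suffixLevenshtein_cons₂ (x :: xs), ih, LevPort.impl_cons]
      · rfl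
      · simp [LevPort.suffixLevenshtein_length]

theorem LevPort.suffixLevenshtein_cons_cons_fst_get_zero
    (x : α) (xs : List α) (y : β) (ys : List β) (w) :
    (suffixLevenshtein C (x :: xs) (y :: ys)).1[0]'w =
      let ⟨dx, _⟩ := suffixLevenshtein C xs (y :: ys)
      let ⟨dy, _⟩ := suffixLevenshtein C (x :: xs) ys
      let ⟨dxy, _⟩ := suffixLevenshtein C xs ys
      min
        (C.delete x + dx[0])
        (min
          (C.insert y + dy[0])
          (C.substitute x y + dxy[0])) := by
  conv =>
    lhs
    dsimp only [LevPort.suffixLevenshtein_cons₂]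
  simp only [LevPort.suffixLevenshtein_cons₁]
  rw [LevPort.impl_cons_fst_zero]
  rfl

@[simp] theorem levenshtein_nil_nil : levenshtein C [] [] = 0 := by
  simp [levenshtein, suffixLevenshtein]

theorem LevPort.impl_nil_fst (y : β) : ∀ (S : {r : List δ // 0 < r.length}), S.1.length = 1 →
    (impl C [] y S).1 = [C.insert y + S.1[0]'S.2]
  | ⟨[_], _⟩, _ => rfl

@[simp] theorem levenshtein_nil_cons (y : β) (ys : List β) :
    levenshtein C [] (y :: ys) = C.insert y + levenshtein C [] ys := by
  have hl := LevPort.suffixLevenshtein_length (C := C) ([] : List α) ys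
  simp only [levenshtein, LevPort.suffixLevenshtein_cons₂]
  simp [LevPort.impl_nil_fst y _ (by simpa using hl)]

@[simp] theorem levenshtein_cons_nil (x : α) (xs : List α) :
    levenshtein C (x :: xs) [] = C.delete x + levenshtein C xs [] :=
  rfl

@[simp] theorem levenshtein_cons_cons (x : α) (xs : List α) (y : β) (ys : List β) :
    levenshtein C (x :: xs) (y :: ys) =
      min (C.delete x + levenshtein C xs (y :: ys))
        (min (C.insert y + levenshtein C (x :: xs) ys)
          (C.substitute x y + levenshtein C xs ys)) :=
  LevPort.suffixLevenshtein_cons_cons_fst_get_zero ..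

end LevPort

namespace LevBall

abbrev C : Levenshtein.Cost Bool Bool ℕ := Levenshtein.defaultCost

lemma lev_nil_left (t : List Bool) : levenshtein C [] t = t.length := by
  induction t with
  | nil => simp
  | cons b t ih => simp [ih]; omega

lemma lev_nil_right (s : List Bool) : levenshtein C s [] = s.length := by
  induction s with
  | nil => simp
  | cons a s ih => simp [ih]; omega

lemma lev_eq_zero : ∀ s t : List Bool, levenshtein C s t = 0 → s = t
  | [], t, h => by rw [lev_nil_left] at h; simp_all
  | a :: s, [], h => by rw [lev_nil_right] at h; simp_all
  | a :: s, b :: t, h => by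
    rw [levenshtein_cons_cons] at h
    simp only [Levenshtein.defaultCost_delete, Levenshtein.defaultCost_insert,
      Levenshtein.defaultCost_substitute] at h
    have hab : a = b := by by_contra hne; simp [hne] at h
    subst hab
    simp at h
    have := lev_eq_zero s t (by omega)
    simp [this]

/-- delete first char of left argument changes distance by at most 1 -/
lemma del_left (a : Bool) (s t : List Bool) :
    levenshtein C (a :: s) t ≤ 1 + levenshtein C s t := by
  cases t with
  | nil => simp [lev_nil_right]
  | cons d t' =>
    rw [levenshtein_cons_cons]
    simp only [Levenshtein.defaultCost_delete]
    omega

lemma ins_right (s : List Bool) (b : Bool) (t : List Bool) :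
    levenshtein C s (b :: t) ≤ 1 + levenshtein C s t := by
  cases s with
  | nil => simp [lev_nil_left]
  | cons c s' =>
    rw [levenshtein_cons_cons]
    simp only [Levenshtein.defaultCost_insert]
    omega

lemma le_one_add_right (s : List Bool) (b : Bool) (t : List Bool) :
    levenshtein C s t ≤ 1 + levenshtein C s (b :: t) := by
  induction s with
  | nil => rw [lev_nil_left, lev_nil_left]; simp only [List.length_cons]; omega
  | cons c s' ih =>
    rw [levenshtein_cons_cons]
    simp only [Levenshtein.defaultCost_delete, Levenshtein.defaultCost_insert,
      Levenshtein.defaultCost_substitute]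
    have h1 := del_left c s' t
    omega

lemma le_one_add_left (s t : List Bool) (a : Bool) :
    levenshtein C s t ≤ 1 + levenshtein C (a :: s) t := by
  induction t with
  | nil => rw [lev_nil_right, lev_nil_right]; simp only [List.length_cons]; omega
  | cons d t' ih =>
    rw [levenshtein_cons_cons]
    simp only [Levenshtein.defaultCost_delete, Levenshtein.defaultCost_insert,
      Levenshtein.defaultCost_substitute]
    have h1 := ins_right s d t'
    omega

/-- removing a common first character does not increase the distance -/
lemma lev_le_cons_cons (a : Bool) (s t : List Bool) :
    levenshtein C s t ≤ levenshtein C (a :: s) (a :: t) := by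
  rw [levenshtein_cons_cons]
  simp only [Levenshtein.defaultCost_delete, Levenshtein.defaultCost_insert,
    Levenshtein.defaultCost_substitute, if_pos rfl]
  have h1 := le_one_add_right s a t
  have h2 := le_one_add_left s t a
  omega

lemma lev_len : ∀ s t : List Bool, t.length ≤ s.length + levenshtein C s t
  | [], t => by rw [lev_nil_left]; simp
  | a :: s, [] => by simp
  | a :: s, b :: t => by
    rw [levenshtein_cons_cons]
    simp only [Levenshtein.defaultCost_delete, Levenshtein.defaultCost_insert,
      Levenshtein.defaultCost_substitute]
    have h1 := lev_len s (b :: t)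
    have h2 := lev_len (a :: s) t
    have h3 := lev_len s t
    simp only [List.length_cons] at *
    omega
  termination_by s t => s.length + t.length

def ball (s : List Bool) (D : ℕ) : Set (List Bool) :=
  {t | levenshtein C s t ≤ D}

lemma ball_finite (s : List Bool) (D : ℕ) : (ball s D).Finite := by
  apply (List.finite_length_le Bool (s.length + D)).subset
  intro t ht
  have := lev_len s t
  simp only [Set.mem_setOf_eq]
  exact le_trans this (by exact Nat.add_le_add_left ht s.length)

lemma short_card : ∀ D : ℕ, ({t : List Bool | t.length ≤ D}).ncard ≤ 2 ^ (D + 1) - 1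
  | 0 => by
    have : {t : List Bool | t.length ≤ 0} = {([] : List Bool)} := by
      ext t; simp [List.length_eq_zero_iff]
    rw [this, Set.ncard_singleton]; norm_num
  | (D + 1) => by
    have hsub : {t : List Bool | t.length ≤ D + 1} ⊆
        {([] : List Bool)} ∪ (List.cons true '' {t | t.length ≤ D}) ∪
          (List.cons false '' {t | t.length ≤ D}) := by
      rintro (_ | ⟨b, t⟩) ht
      · left; left; rfl
      · simp only [Set.mem_setOf_eq, List.length_cons] at ht
        cases b
        · right; exact ⟨t, by simpa using ht, rfl⟩
        · left; right; exact ⟨t, by simpa using ht, rfl⟩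
    have hfin : ({t : List Bool | t.length ≤ D}).Finite := List.finite_length_le Bool D
    have hcard := Set.ncard_le_ncard hsub (by
      refine ((Set.finite_singleton _).union (hfin.image _)).union (hfin.image _))
    have h1 := Set.ncard_union_le ({([] : List Bool)} ∪ (List.cons true '' {t | t.length ≤ D}))
      (List.cons false '' {t | t.length ≤ D})
    have h2 := Set.ncard_union_le ({([] : List Bool)}) (List.cons true '' {t : List Bool | t.length ≤ D})
    have h3 := Set.ncard_image_le (f := List.cons true) hfin
    have h4 := Set.ncard_image_le (f := List.cons false) hfin
    have h5 := short_card D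
    rw [Set.ncard_singleton] at h2
    have hpow : 2 ^ (D + 1 + 1) - 1 = 1 + (2 ^ (D+1) - 1) + (2 ^ (D+1) - 1) := by
      have : 1 ≤ 2 ^ (D+1) := Nat.one_le_two_pow
      omega
    omega

def g : ℕ → ℕ → ℕ
  | 0, D => 2 ^ (D + 1) - 1
  | _ + 1, 0 => 1
  | m + 1, D + 1 => 1 + g m (D + 1) + 2 * g m D + g (m + 1) D

lemma ball_le : ∀ (s : List Bool) (D : ℕ), (ball s D).ncard ≤ g s.length D
  | [], D => by
    have : ball [] D = {t : List Bool | t.length ≤ D} := by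
      ext t; simp [ball, lev_nil_left]
    rw [this]
    simpa [g] using short_card D
  | a :: s, 0 => by
    have hsub : ball (a :: s) 0 ⊆ {a :: s} := by
      intro t ht
      simp only [ball, Set.mem_setOf_eq, Nat.le_zero] at ht
      exact (lev_eq_zero _ _ ht).symm
    calc (ball (a :: s) 0).ncard ≤ ({a :: s} : Set (List Bool)).ncard :=
          Set.ncard_le_ncard hsub (Set.finite_singleton _)
      _ = 1 := Set.ncard_singleton _
      _ ≤ g (a :: s).length 0 := by simp [g]
  | a :: s, D + 1 => by
    set b := !a with hb
    have hsub : ball (a :: s) (D + 1) ⊆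
        ({([] : List Bool)} ∪ (List.cons a '' ball s (D + 1))) ∪
          (ball s D ∪ (List.cons b '' ball (a :: s) D ∪ List.cons b '' ball s D)) := by
      rintro (_ | ⟨c, t⟩) ht
      · left; left; rfl
      · simp only [ball, Set.mem_setOf_eq] at ht
        by_cases hca : c = a
        · subst hca
          have := le_trans (lev_le_cons_cons c s t) ht
          left; right; exact ⟨t, this, rfl⟩
        · have hcb : c = b := by cases a <;> cases c <;> simp_all
          subst hcb
          rw [levenshtein_cons_cons] at ht
          simp only [Levenshtein.defaultCost_delete, Levenshtein.defaultCost_insert,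
            Levenshtein.defaultCost_substitute] at ht
          have hab : ¬ (a = b) := by cases a <;> simp [hb]
          rw [if_neg hab] at ht
          have hcase : levenshtein C s (b :: t) ≤ D ∨ levenshtein C (a :: s) t ≤ D ∨
              levenshtein C s t ≤ D := by omega
          rcases hcase with h | h | h
          · right; left; exact h
          · right; right; left; exact ⟨t, h, rfl⟩
          · right; right; right; exact ⟨t, h, rfl⟩
    have hfin1 := ball_finite s (D + 1)
    have hfin2 := ball_finite s D
    have hfin3 := ball_finite (a :: s) D
    have hcard := Set.ncard_le_ncard hsub (by
      refine Set.Finite.union ?_ ?_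
      · exact (Set.finite_singleton _).union (hfin1.image _)
      · exact hfin2.union ((hfin3.image _).union (hfin2.image _)))
    have u1 := Set.ncard_union_le ({([] : List Bool)} ∪ (List.cons a '' ball s (D + 1)))
      (ball s D ∪ (List.cons b '' ball (a :: s) D ∪ List.cons b '' ball s D))
    have u2 := Set.ncard_union_le ({([] : List Bool)}) (List.cons a '' ball s (D + 1))
    have u3 := Set.ncard_union_le (ball s D) (List.cons b '' ball (a :: s) D ∪ List.cons b '' ball s D)
    have u4 := Set.ncard_union_le (List.cons b '' ball (a :: s) D) (List.cons b '' ball s D)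
    have i1 := Set.ncard_image_le (f := List.cons a) hfin1
    have i2 := Set.ncard_image_le (f := List.cons b) hfin3
    have i3 := Set.ncard_image_le (f := List.cons b) hfin2
    rw [Set.ncard_singleton] at u2
    have r1 := ball_le s (D + 1)
    have r2 := ball_le (a :: s) D
    have r3 := ball_le s D
    simp only [List.length_cons] at *
    rw [show g (s.length + 1) (D + 1) = 1 + g s.length (D + 1) + 2 * g s.length D +
      g (s.length + 1) D from by simp [g]]
    omega
  termination_by s D => s.length + D

lemma g_le_choose : ∀ m D : ℕ, g m D ≤ (4 * m + 5 * D + 4).choose D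
  | 0, 0 => by simp [g]
  | 0, D + 1 => by
    have ih := g_le_choose 0 D
    have hp : (5 * (D + 1) + 4).choose (D + 1) =
        (5 * D + 8).choose D + ((5 * D + 7).choose D + (5 * D + 7).choose (D + 1)) := by
      rw [show 5 * (D + 1) + 4 = (5 * D + 8) + 1 from by ring, Nat.choose_succ_succ,
        show 5 * D + 8 = (5 * D + 7) + 1 from rfl, Nat.choose_succ_succ]
    have m1 : (5 * D + 4).choose D ≤ (5 * D + 8).choose D := Nat.choose_le_choose D (by omega)
    have m2 : (5 * D + 4).choose D ≤ (5 * D + 7).choose D := Nat.choose_le_choose D (by omega)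
    have m3 : 0 < (5 * D + 7).choose (D + 1) := Nat.choose_pos (by omega)
    have hg : g 0 (D + 1) = 2 ^ (D + 1 + 1) - 1 := by simp [g]
    have hg' : g 0 D = 2 ^ (D + 1) - 1 := by simp [g]
    have hpow : 2 ^ (D + 1 + 1) - 1 ≤ 2 * (2 ^ (D + 1) - 1) + 1 := by
      have : 1 ≤ 2 ^ (D + 1) := Nat.one_le_two_pow
      omega
    rw [show 4 * 0 + 5 * (D + 1) + 4 = 5 * (D + 1) + 4 from by ring]
    rw [show 4 * 0 + 5 * D + 4 = 5 * D + 4 from by ring] at ih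
    omega
  | m + 1, 0 => by simp [g]
  | m + 1, D + 1 => by
    have ih1 := g_le_choose m (D + 1)
    have ih2 := g_le_choose m D
    have ih3 := g_le_choose (m + 1) D
    have hp : (4 * (m + 1) + 5 * (D + 1) + 4).choose (D + 1) =
        (4 * m + 5 * D + 12).choose D + ((4 * m + 5 * D + 11).choose D +
          ((4 * m + 5 * D + 10).choose D + ((4 * m + 5 * D + 9).choose D +
            (4 * m + 5 * D + 9).choose (D + 1)))) := by
      rw [show 4 * (m + 1) + 5 * (D + 1) + 4 = (4 * m + 5 * D + 12) + 1 from by ring,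
        Nat.choose_succ_succ, show 4 * m + 5 * D + 12 = (4 * m + 5 * D + 11) + 1 from rfl,
        Nat.choose_succ_succ, show 4 * m + 5 * D + 11 = (4 * m + 5 * D + 10) + 1 from rfl,
        Nat.choose_succ_succ, show 4 * m + 5 * D + 10 = (4 * m + 5 * D + 9) + 1 from rfl,
        Nat.choose_succ_succ]
    have m1 : (4 * m + 5 * D + 4).choose D ≤ (4 * m + 5 * D + 12).choose D :=
      Nat.choose_le_choose D (by omega)
    have m2 : (4 * m + 5 * D + 4).choose D ≤ (4 * m + 5 * D + 11).choose D :=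
      Nat.choose_le_choose D (by omega)
    have m3 : (4 * (m + 1) + 5 * D + 4).choose D ≤ (4 * m + 5 * D + 10).choose D :=
      Nat.choose_le_choose D (by omega)
    have m4 : 0 < (4 * m + 5 * D + 9).choose D := Nat.choose_pos (by omega)
    have m5 : (4 * m + 5 * (D + 1) + 4).choose (D + 1) = (4 * m + 5 * D + 9).choose (D + 1) := by
      congr 1
    rw [m5] at ih1
    have hg : g (m + 1) (D + 1) = 1 + g m (D + 1) + 2 * g m D + g (m + 1) D := by simp [g]
    omega
  termination_by m D => m + D

lemma choose_le_exp (n D : ℕ) (hD : 0 < D) :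
    ((n.choose D : ℝ)) ≤ (Real.exp 1 * n / D) ^ D := by
  have hfac : (0 : ℝ) < (D.factorial : ℝ) := by positivity
  have hDpos : (0 : ℝ) < (D : ℝ) := by exact_mod_cast hD
  -- choose * D! ≤ n ^ D
  have h1 : (n.choose D : ℝ) * (D.factorial : ℝ) ≤ (n : ℝ) ^ D := by
    have : D.factorial * n.choose D ≤ n ^ D := by
      rw [← Nat.descFactorial_eq_factorial_mul_choose]
      exact Nat.descFactorial_le_pow n D
    calc (n.choose D : ℝ) * (D.factorial : ℝ) = ((D.factorial * n.choose D : ℕ) : ℝ) := by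
          push_cast; ring
      _ ≤ ((n ^ D : ℕ) : ℝ) := by exact_mod_cast this
      _ = (n : ℝ) ^ D := by push_cast; ring
  -- D ^ D / D! ≤ e ^ D
  have h2 : (D : ℝ) ^ D / (D.factorial : ℝ) ≤ Real.exp 1 ^ D := by
    rw [Real.exp_one_pow]
    have := Real.sum_le_exp_of_nonneg (x := (D : ℝ)) (by positivity) (D + 1)
    refine le_trans ?_ this
    have hmem : D ∈ Finset.range (D + 1) := by simp
    refine Finset.single_le_sum (f := fun i => (D : ℝ) ^ i / (i.factorial : ℝ)) ?_ hmem
    intro i _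
    positivity
  have h3 : (n.choose D : ℝ) ≤ (n : ℝ) ^ D / (D.factorial : ℝ) := by
    rw [le_div_iff₀ hfac]; exact h1
  calc (n.choose D : ℝ) ≤ (n : ℝ) ^ D / (D.factorial : ℝ) := h3
    _ = ((n : ℝ) / D) ^ D * ((D : ℝ) ^ D / (D.factorial : ℝ)) := by
        field_simp
        rw [div_pow, div_mul_cancel₀ _ (by positivity)]
    _ ≤ ((n : ℝ) / D) ^ D * Real.exp 1 ^ D := by
        refine mul_le_mul_of_nonneg_left h2 (by positivity)
    _ = (Real.exp 1 * n / D) ^ D := by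
        rw [← mul_pow]
        congr 1
        field_simp

end LevBall

/-- **Counting the Levenshtein ball.** For a fixed bitstring `s` of length `m`,
the number of strings `s'` over `{0,1}` with `ED(s, s') ≤ D` is at most
`binom(4m + 5D + 4, D)`, which by Stirling is at most
`(4e·m/D + 5e + 4e/D)^D`. -/
theorem levenshtein_ball_count (m D : ℕ) (hD : 0 < D) (s : List Bool) (hs : s.length = m) :
    ({s' : List Bool | levenshtein Levenshtein.defaultCost s s' ≤ D}.ncard ≤
        (4 * m + 5 * D + 4).choose D) ∧
      (((4 * m + 5 * D + 4).choose D : ℝ) ≤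
        (4 * Real.exp 1 * m / D + 5 * Real.exp 1 + 4 * Real.exp 1 / D) ^ D) := by
  subst hs
  constructor
  · exact le_trans (LevBall.ball_le s D) (LevBall.g_le_choose s.length D)
  · have h := LevBall.choose_le_exp (4 * s.length + 5 * D + 4) D hD
    refine le_trans h (le_of_eq ?_)
    have hDne : (D : ℝ) ≠ 0 := by positivity
    push_cast
    field_simp
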